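/- Let A be an m×m integer matrix all of whose proper principal minors equal 1 and whose determinant equals 1. Then there exists a permutation matrix P such that P⁻¹AP is a unipotent upper triangular matrix (all diagonal entries 1 and all entries below the diagonal 0). -/

import Mathlib

open Relation
open Fin.NatCast Fin.CommRing


variable {m : ℕ}

lemma aux_minor (A : Matrix (Fin m) (Fin m) ℤ)
    (hpp : ∀ S : Finset (Fin m), S ≠ Finset.univ →
      (A.submatrix (fun s : {x : Fin m // x ∈ S} => (s : Fin m))
        (fun s : {x : Fin m // x ∈ S} => (s : Fin m))).det = 1)
    (hdet : A.det = 1) {k : ℕ} (f : Fin k → Fin m)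
    (hf : Function.Injective f) : (A.submatrix f f).det = 1 := by
  classical
  by_cases hS : (Finset.univ.image f) = Finset.univ
  · have hsurj : Function.Surjective f := by
      intro y
      have : y ∈ Finset.univ.image f := hS ▸ Finset.mem_univ y
      simpa using this
    have e := Equiv.ofBijective f ⟨hf, hsurj⟩
    have he : A.submatrix (Equiv.ofBijective f ⟨hf, hsurj⟩) (Equiv.ofBijective f ⟨hf, hsurj⟩)
        = A.submatrix f f := rfl
    rw [← he, Matrix.det_submatrix_equiv_self, hdet]
  · have h1 := hpp _ hS
    have hmem : ∀ i : Fin k, f i ∈ Finset.univ.image f := by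
      intro i; exact Finset.mem_image_of_mem f (Finset.mem_univ i)
    let e : Fin k ≃ {x : Fin m // x ∈ Finset.univ.image f} :=
      Equiv.ofBijective (fun i => ⟨f i, hmem i⟩)
        ⟨fun a b hab => hf (congrArg Subtype.val hab), by
          rintro ⟨y, hy⟩
          obtain ⟨i, -, rfl⟩ := Finset.mem_image.mp hy
          exact ⟨i, rfl⟩⟩
    have he : (A.submatrix (fun s : {x : Fin m // x ∈ Finset.univ.image f} => (s : Fin m))
        (fun s : {x : Fin m // x ∈ Finset.univ.image f} => (s : Fin m))).submatrix e e
        = A.submatrix f f := rfl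
    rw [← he, Matrix.det_submatrix_equiv_self]
    exact h1

lemma aux_diag (A : Matrix (Fin m) (Fin m) ℤ)
    (hpp : ∀ S : Finset (Fin m), S ≠ Finset.univ →
      (A.submatrix (fun s : {x : Fin m // x ∈ S} => (s : Fin m))
        (fun s : {x : Fin m // x ∈ S} => (s : Fin m))).det = 1)
    (hdet : A.det = 1) (a : Fin m) : A a a = 1 := by
  classical
  by_cases hS : ({a} : Finset (Fin m)) = Finset.univ
  · haveI : Unique (Fin m) := ⟨⟨a⟩, fun x => by
      have : x ∈ ({a} : Finset (Fin m)) := hS ▸ Finset.mem_univ x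
      simpa using this⟩
    rw [Matrix.det_unique] at hdet
    have h1 : (default : Fin m) = a := Unique.uniq _ a |>.symm
    rwa [h1] at hdet
  · have h1 := hpp {a} hS
    haveI : Unique {x : Fin m // x ∈ ({a} : Finset (Fin m))} :=
      ⟨⟨⟨a, Finset.mem_singleton_self a⟩⟩, fun x => Subtype.ext (Finset.mem_singleton.mp x.2)⟩
    rw [Matrix.det_unique] at h1
    have hd : ((default : {x : Fin m // x ∈ ({a} : Finset (Fin m))}) : Fin m) = a :=
      Finset.mem_singleton.mp (default : {x : Fin m // x ∈ ({a} : Finset (Fin m))}).2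
    simp only [Matrix.submatrix_apply] at h1
    rwa [hd] at h1


lemma aux_perm_class {k : ℕ} (σ : Equiv.Perm (Fin (k+2)))
    (h : ∀ i, σ i = i ∨ σ i = i - 1) :
    σ = 1 ∨ σ = (finRotate (k+2))⁻¹ := by
  have h10 : (1 : Fin (k+2)) ≠ 0 := by
    simp [Fin.ext_iff]
  by_cases hσ : σ = 1
  · exact Or.inl hσ
  right
  obtain ⟨i0, hi0⟩ : ∃ i, σ i ≠ i := by
    by_contra hc
    push_neg at hc
    exact hσ (Equiv.ext hc)
  have hi0' : σ i0 = i0 - 1 := (h i0).resolve_left hi0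
  have key : ∀ t : ℕ, σ (i0 - (t : Fin (k+2))) = i0 - (t : Fin (k+2)) - 1 := by
    intro t
    induction t with
    | zero => simpa using hi0'
    | succ t ih =>
      have hcast : ((t + 1 : ℕ) : Fin (k+2)) = (t : Fin (k+2)) + 1 := by push_cast; ring
      rw [hcast]
      rcases h (i0 - ((t : Fin (k+2)) + 1)) with hx | hx
      · exfalso
        have e1 : i0 - ((t : Fin (k+2)) + 1) = i0 - (t : Fin (k+2)) - 1 := by ring
        rw [e1] at hx
        have h2 : i0 - (t : Fin (k+2)) - 1 = i0 - (t : Fin (k+2)) :=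
          σ.injective (hx.trans ih.symm)
        exact h10 (by linear_combination -h2)
      · exact hx
  have hall : ∀ j, σ j = j - 1 := by
    intro j
    have hj : i0 - ((i0 - j).val : Fin (k+2)) = j := by
      rw [Fin.cast_val_eq_self]; ring
    have := key (i0 - j).val
    rwa [hj] at this
  ext j
  have h2 : finRotate (k+2) (j - 1) = j := by
    rw [finRotate_succ_apply]; ring
  have : (finRotate (k+2))⁻¹ j = j - 1 := by
    rw [Equiv.Perm.inv_eq_iff_eq, h2]
  rw [hall j, this]

lemma aux_cycle_det {k : ℕ} (M : Matrix (Fin (k+2)) (Fin (k+2)) ℤ)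
    (hdiag : ∀ i, M i i = 1) (hz : ∀ i j, j ≠ i → j ≠ i + 1 → M i j = 0) :
    M.det = 1 + (-1)^(k+1) * ∏ i, M i (i+1) := by
  classical
  set c : Equiv.Perm (Fin (k+2)) := (finRotate (k+2))⁻¹ with hcdef
  have hc : ∀ i, c i = i - 1 := by
    intro i
    rw [hcdef, Equiv.Perm.inv_eq_iff_eq, finRotate_succ_apply]
    ring
  have h1c : (1 : Equiv.Perm (Fin (k+2))) ≠ c := by
    intro hcontra
    have h0 : (0 : Fin (k+2)) = 0 - 1 := by
      conv_lhs => rw [show (0 : Fin (k+2)) = (1 : Equiv.Perm (Fin (k+2))) 0 from rfl, hcontra, hc 0]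
    have : (1 : Fin (k+2)) = 0 := by linear_combination h0
    simp [Fin.ext_iff] at this
  rw [Matrix.det_apply]
  have hsub : ∑ σ : Equiv.Perm (Fin (k+2)), Equiv.Perm.sign σ • ∏ i, M (σ i) i
      = ∑ σ ∈ ({1, c} : Finset (Equiv.Perm (Fin (k+2)))),
          Equiv.Perm.sign σ • ∏ i, M (σ i) i := by
    refine (Finset.sum_subset (Finset.subset_univ _) ?_).symm
    intro σ _ hσ
    simp only [Finset.mem_insert, Finset.mem_singleton] at hσ
    push_neg at hσ
    have : ¬ ∀ i, σ i = i ∨ σ i = i - 1 := by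
      intro hall
      rcases aux_perm_class σ hall with h | h
      · exact hσ.1 h
      · exact hσ.2 (h.trans rfl)
    push_neg at this
    obtain ⟨i, hi1, hi2⟩ := this
    have hMzero : M (σ i) i = 0 := by
      apply hz (σ i) i
      · intro hcc; exact hi1 hcc.symm
      · intro hcc
        exact hi2 (by linear_combination -hcc)
    rw [show (∏ i, M (σ i) i) = 0 from Finset.prod_eq_zero (Finset.mem_univ i) hMzero,
      smul_zero]
  rw [hsub, Finset.sum_pair h1c]
  have hterm1 : Equiv.Perm.sign (1 : Equiv.Perm (Fin (k+2))) • ∏ i, M ((1 : Equiv.Perm (Fin (k+2))) i) i = 1 := by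
    simp only [Equiv.Perm.sign_one, one_smul, Equiv.Perm.one_apply]
    rw [Finset.prod_congr rfl (fun i _ => hdiag i), Finset.prod_const_one]
  have hprodc : ∏ i, M (c i) i = ∏ i, M i (i+1) := by
    have := Equiv.prod_comp c (fun x => M x (x + 1))
    rw [← this]
    refine Finset.prod_congr rfl fun i _ => ?_
    rw [hc i]
    congr 1
    ring
  have hsignc : Equiv.Perm.sign c = (-1)^(k+1) := by
    rw [hcdef, Equiv.Perm.sign_inv, sign_finRotate]
    rfl
  rw [hterm1, hsignc, hprodc, Units.smul_def, smul_eq_mul]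
  push_cast
  ring



lemma aux_transgen_path {α : Type*} {r : α → α → Prop} {a b : α} (h : TransGen r a b) :
    ∃ n : ℕ, 0 < n ∧ ∃ g : Fin (n+1) → α, g 0 = a ∧ g (Fin.last n) = b ∧
      ∀ i : Fin n, r (g i.castSucc) (g i.succ) := by
  induction h with
  | single hab =>
    refine ⟨1, one_pos, ![a, _], rfl, rfl, ?_⟩
    intro i
    fin_cases i
    simpa using hab
  | tail hab hbc ih =>
    rename_i b' c'
    obtain ⟨n, hn, g, hg0, hgl, hge⟩ := ih
    refine ⟨n+1, n.succ_pos, fun x => if h : x.val < n+1 then g ⟨x.val, h⟩ else c', ?_, ?_, ?_⟩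
    · simpa using hg0
    · simp [Fin.last]
    · intro i
      rcases Nat.lt_or_ge i.val n with hlt | hge'
      · have h1 : (i.castSucc.val : ℕ) < n + 1 := by simp only [Fin.coe_castSucc]; omega
        have h2 : (i.succ.val : ℕ) < n + 1 := by simp only [Fin.val_succ]; omega
        simp only [dif_pos h1, dif_pos h2]
        have := hge ⟨i.val, hlt⟩
        convert this using 2 <;> simp [Fin.ext_iff]
      · have hiv : i.val = n := by omega
        have h1 : (i.castSucc.val : ℕ) < n + 1 := by simp only [Fin.coe_castSucc]; omega
        have h2 : ¬ ((i.succ.val : ℕ) < n + 1) := by simp only [Fin.val_succ]; omega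
        simp only [dif_pos h1, dif_neg h2]
        have hb : g ⟨i.castSucc.val, h1⟩ = b' := by
          rw [← hgl]; congr 1; simp [Fin.ext_iff, Fin.last, hiv]
        rw [hb]
        exact hbc

lemma aux_cycle_of_transgen {α : Type*} {r : α → α → Prop} {a : α} (h : TransGen r a a) :
    ∃ k : ℕ, ∃ f : Fin (k+1) → α, ∀ i : Fin (k+1), r (f i) (f (i+1)) := by
  obtain ⟨n, hn, g, hg0, hgl, hge⟩ := aux_transgen_path h
  obtain ⟨k, rfl⟩ := Nat.exists_eq_succ_of_ne_zero hn.ne'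
  refine ⟨k, fun i => g (Fin.castLE (by omega) i), ?_⟩
  intro i
  rcases Nat.lt_or_ge (i.val + 1) (k+1) with hlt | hge'
  · have hedge := hge ⟨i.val, by omega⟩
    convert hedge using 2 <;> simp [Fin.ext_iff, Fin.add_def] <;> omega
  · have hiv : i.val = k := by omega
    have h1 : ((i+1 : Fin (k+1)).val : ℕ) = 0 := by simp [Fin.add_def, hiv]
    have hedge := hge ⟨k, by omega⟩
    convert hedge using 1
    · congr 1
      simp [Fin.ext_iff, hiv]
    · have e2 : Fin.castLE (by omega : k+1 ≤ k+1+1) (i+1) = (0 : Fin (k+2)) := by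
        simp [Fin.ext_iff, h1]
      show g (Fin.castLE (by omega) (i + 1)) = _
      rw [e2, hg0, ← hgl]
      congr 1



theorem unipotent_upper_triangular_of_principal_minors_one (m : ℕ)
    (A : Matrix (Fin m) (Fin m) ℤ)
    (hpp : ∀ S : Finset (Fin m), S ≠ Finset.univ →
      (A.submatrix (fun s : {x : Fin m // x ∈ S} => (s : Fin m))
        (fun s : {x : Fin m // x ∈ S} => (s : Fin m))).det = 1)
    (hdet : A.det = 1) :
    ∃ σ : Equiv.Perm (Fin m),
      (∀ i : Fin m, A (σ i) (σ i) = 1) ∧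
        ∀ i j : Fin m, j < i → A (σ i) (σ j) = 0 := by
  classical
  set r : Fin m → Fin m → Prop := fun a b => a ≠ b ∧ A a b ≠ 0 with hrdef
  have hdiagA : ∀ a, A a a = 1 := aux_diag A hpp hdet
  have hirr : ∀ a : Fin m, ¬ TransGen r a a := by
    intro a ha
    have hP : ∃ k : ℕ, ∃ f : Fin (k+1) → Fin m, ∀ i, r (f i) (f (i+1)) :=
      aux_cycle_of_transgen ha
    have hk0 : Nat.find hP ≠ 0 := by
      intro h0
      have hk := Nat.find_spec hP
      rw [h0] at hk
      obtain ⟨f, hf⟩ := hk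
      exact (hf 0).1 (congrArg f (by decide : (0 : Fin (0+1)) = 0 + 1))
    obtain ⟨n, hn⟩ := Nat.exists_eq_succ_of_ne_zero hk0
    have hk := Nat.find_spec hP
    rw [hn] at hk
    obtain ⟨f, hf⟩ := hk
    have hmin : ∀ d, d < n + 1 →
        ¬ ∃ g : Fin (d+1) → Fin m, ∀ t, r (g t) (g (t+1)) := by
      intro d hd
      exact Nat.find_min hP (by omega)
    -- chords vanish
    have hchord : ∀ p q : Fin (n+2), q ≠ p → q ≠ p + 1 → ¬ r (f p) (f q) := by
      intro p q hqp hqp1 hrpq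
      have hDlt : (p - q).val < n + 1 := by
        by_contra hge2
        have hdv : (p - q).val = n + 1 := by have := (p - q).isLt; omega
        apply hqp1
        have h1 : p - q = ⟨n+1, by omega⟩ := Fin.ext hdv
        have h2 : (⟨n+1, by omega⟩ : Fin (n+2)) + 1 = 0 := by
          apply Fin.ext; simp [Fin.add_def]
        linear_combination -h1 - h2
      apply hmin (p - q).val hDlt
      refine ⟨fun t => f (q + ((t.val : ℕ) : Fin (n+2))), ?_⟩
      intro t
      rcases Nat.lt_or_ge (t.val + 1) ((p - q).val + 1) with hlt | hge2
      · have ht1 : ((t+1 : Fin ((p - q).val + 1))).val = t.val + 1 := by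
          simp [Fin.add_def]; omega
        have hedge := hf (q + ((t.val : ℕ) : Fin (n+2)))
        have e2 : q + (((t+1 : Fin ((p - q).val + 1)).val : ℕ) : Fin (n+2))
            = q + ((t.val : ℕ) : Fin (n+2)) + 1 := by
          rw [ht1]
          push_cast
          ring
        show r (f (q + ((t.val : ℕ) : Fin (n+2))))
          (f (q + (((t+1 : Fin ((p - q).val + 1)).val : ℕ) : Fin (n+2))))
        rw [e2]
        exact hedge
      · have htv : t.val = (p - q).val := by omega
        have ht1 : ((t+1 : Fin ((p - q).val + 1))).val = 0 := by
          simp [Fin.add_def, htv]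
        have e1 : q + ((t.val : ℕ) : Fin (n+2)) = p := by
          rw [htv, Fin.cast_val_eq_self]
          ring
        have e2 : q + (((t+1 : Fin ((p - q).val + 1)).val : ℕ) : Fin (n+2)) = q := by
          rw [ht1]
          push_cast
          ring
        show r (f (q + ((t.val : ℕ) : Fin (n+2))))
          (f (q + (((t+1 : Fin ((p - q).val + 1)).val : ℕ) : Fin (n+2))))
        rw [e1, e2]
        exact hrpq
    -- injectivity
    have hfinj : Function.Injective f := by
      intro p q hpq
      by_contra hne
      by_cases h1 : q = p + 1
      · exact (hf p).1 (h1 ▸ hpq)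
      · by_cases h2 : p = q + 1
        · exact (hf q).1 (by rw [← h2, ← hpq])
        · have hq1 : q ≠ p - 1 := fun hcc => h2 (by linear_combination -hcc)
          have hq2 : q ≠ (p - 1) + 1 := fun hcc => hne (by linear_combination -hcc)
          have hedge := hf (p - 1)
          rw [show p - 1 + 1 = p from by ring] at hedge
          rw [hpq] at hedge
          exact hchord (p-1) q hq1 hq2 hedge
    -- the cycle submatrix
    have hdetM : (A.submatrix f f).det = 1 := aux_minor A hpp hdet f hfinj
    have hMdiag : ∀ i, (A.submatrix f f) i i = 1 := fun i => hdiagA (f i)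
    have hMz : ∀ i j, j ≠ i → j ≠ i + 1 → (A.submatrix f f) i j = 0 := by
      intro i j h1 h2
      have hnc := hchord i j h1 h2
      have hne : f i ≠ f j := fun e => h1 (hfinj e).symm
      by_contra hA
      exact hnc ⟨hne, hA⟩
    have hdformula := aux_cycle_det (A.submatrix f f) hMdiag hMz
    rw [hdetM] at hdformula
    have h2 : (-1 : ℤ)^(n+1) * ∏ i, (A.submatrix f f) i (i+1) = 0 := by
      linarith [hdformula]
    rcases mul_eq_zero.mp h2 with h | h
    · exact pow_ne_zero _ (neg_ne_zero.mpr one_ne_zero) h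
    · obtain ⟨i, -, hi⟩ := Finset.prod_eq_zero_iff.mp h
      exact (hf i).2 hi
  -- linear extension
  let po : Fin m → Fin m → Prop := fun a b => a = b ∨ TransGen r a b
  haveI hpo : IsPartialOrder (Fin m) po :=
    { refl := fun a => Or.inl rfl
      trans := by
        rintro a b c (rfl | hab) (rfl | hbc)
        · exact Or.inl rfl
        · exact Or.inr hbc
        · exact Or.inr hab
        · exact Or.inr (hab.trans hbc)
      antisymm := by
        rintro a b (rfl | hab) hba
        · rfl
        · rcases hba with rfl | hba
          · rfl
          · exact absurd (hab.trans hba) (hirr a) }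
  obtain ⟨s, hs, hps⟩ := extend_partialOrder po
  haveI := hs
  haveI : DecidableRel s := Classical.decRel s
  let l := Finset.univ.sort s
  have hlen : l.length = m := by
    rw [Finset.length_sort, Finset.card_univ, Fintype.card_fin]
  have hnd : l.Nodup := Finset.sort_nodup (r := s) (s := Finset.univ)
  have hsort : l.Pairwise s := Finset.pairwise_sort (r := s) (s := Finset.univ)
  let g : Fin m → Fin m := fun i => l.get (Fin.cast hlen.symm i)
  have hginj : Function.Injective g := by
    intro i j hij
    have h0 := List.nodup_iff_injective_get.mp hnd hij
    have hv : (Fin.cast hlen.symm i).val = (Fin.cast hlen.symm j).val := congrArg Fin.val h0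
    exact Fin.ext (by simpa using hv)
  have hbij : Function.Bijective g := Finite.injective_iff_bijective.mp hginj
  refine ⟨Equiv.ofBijective g hbij, ?_, ?_⟩
  · intro i
    exact hdiagA (g i)
  · intro i j hji
    show A (g i) (g j) = 0
    have hne : g i ≠ g j := fun e => absurd (hginj e) (by intro h; rw [h] at hji; exact lt_irrefl _ hji)
    by_contra hA
    have hrel : r (g i) (g j) := ⟨hne, hA⟩
    have h1 : s (g i) (g j) := hps _ _ (Or.inr (TransGen.single hrel))
    have h2 : s (g j) (g i) := hsort.rel_get_of_lt
      (by rw [Fin.lt_def]; simp only [Fin.coe_cast]; exact hji)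
    exact hne (antisymm h1 h2)
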